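/- Let E = (Fin 3 → ℝ) × (Fin 3 → ℝ) with points written (u, v) and tangent vectors written (a, b). Define the field of symmetric bilinear forms g : E → (E → E → ℝ) by g(u,v)((a,b),(a',b')) = Σ_{i=1}^{3} (a_i b'_i + a'_i b_i) + 2 v₂ a₁ a'₁ + 2 v₃ a₂ a'₂ + 2 v₁⁷ a₃ a'₃ (this is the metric ds² = 2du₁(dv₁ + v₂du₁) + 2du₂(dv₂ + v₃du₂) + 2du₃(dv₃ + v₁⁷du₃)). For λ = (1, 2, 4) and τ ∈ ℝ let B_τ : E → E be the linear boost B_τ(u, v) = ((e^{−λ_i τ} u_i)_i, (e^{λ_i τ} v_i)_i), and define the pullback (Φ_τ g)(p)(w, w') = g(B_τ p)(B_τ w, B_τ w'). Then for all p, w, w' ∈ E, (Φ_τ g)(p)(w, w') converges as τ → +∞ to g₁(p)(w, w'), where g₁(u,v)((a,b),(a',b')) = Σ_{i=1}^{3} (a_i b'_i + a'_i b_i) + 2 v₂ a₁ a'₁ + 2 v₃ a₂ a'₂ (the metric 2du₁(dv₁ + v₂du₁) + 2du₂(dv₂ + v₃du₂) + 2du₃dv₃). -/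

import Mathlib

open Real Filter Topology

/-- The metric `ds² = 2du₁(dv₁ + v₂du₁) + 2du₂(dv₂ + v₃du₂) + 2du₃(dv₃ + v₁⁷du₃)` as a
field of bilinear forms on `E = (Fin 3 → ℝ) × (Fin 3 → ℝ)`; points are `(u, v)` and
tangent vectors `(a, b)`. -/
noncomputable def gVSI : ((Fin 3 → ℝ) × (Fin 3 → ℝ)) → ((Fin 3 → ℝ) × (Fin 3 → ℝ)) →
    ((Fin 3 → ℝ) × (Fin 3 → ℝ)) → ℝ :=
  fun p w w' =>
    (∑ i : Fin 3, (w.1 i * w'.2 i + w'.1 i * w.2 i))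
      + 2 * p.2 1 * w.1 0 * w'.1 0
      + 2 * p.2 2 * w.1 1 * w'.1 1
      + 2 * (p.2 0) ^ 7 * w.1 2 * w'.1 2

/-- The limiting metric `2du₁(dv₁ + v₂du₁) + 2du₂(dv₂ + v₃du₂) + 2du₃dv₃`. -/
noncomputable def gVSIlimit : ((Fin 3 → ℝ) × (Fin 3 → ℝ)) → ((Fin 3 → ℝ) × (Fin 3 → ℝ)) →
    ((Fin 3 → ℝ) × (Fin 3 → ℝ)) → ℝ :=
  fun p w w' =>
    (∑ i : Fin 3, (w.1 i * w'.2 i + w'.1 i * w.2 i))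
      + 2 * p.2 1 * w.1 0 * w'.1 0
      + 2 * p.2 2 * w.1 1 * w'.1 1

/-- The linear boost `B_τ(u, v) = ((e^{−λ_i τ} u_i)_i, (e^{λ_i τ} v_i)_i)` with
boost vector `λ = (1, 2, 4)`. -/
noncomputable def boost124 (τ : ℝ) :
    ((Fin 3 → ℝ) × (Fin 3 → ℝ)) → ((Fin 3 → ℝ) × (Fin 3 → ℝ)) :=
  fun p =>
    (fun i => Real.exp (-(![(1 : ℝ), 2, 4] i) * τ) * p.1 i,
     fun i => Real.exp ((![(1 : ℝ), 2, 4] i) * τ) * p.2 i)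

/-- The boost limit with boost vector `(1,2,4)`: the pullback of the metric
`2du₁(dv₁ + v₂du₁) + 2du₂(dv₂ + v₃du₂) + 2du₃(dv₃ + v₁⁷du₃)` converges pointwise, as
`τ → +∞`, to `2du₁(dv₁ + v₂du₁) + 2du₂(dv₂ + v₃du₂) + 2du₃dv₃`. -/
theorem boost_limit_VSI_step1 :
    ∀ p w w' : (Fin 3 → ℝ) × (Fin 3 → ℝ),
      Tendsto
        (fun τ : ℝ => gVSI (boost124 τ p) (boost124 τ w) (boost124 τ w'))
        atTop (𝓝 (gVSIlimit p w w')) := by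
  intro p w w'
  have h : ∀ τ : ℝ, gVSI (boost124 τ p) (boost124 τ w) (boost124 τ w')
      = gVSIlimit p w w' + 2 * (p.2 0) ^ 7 * w.1 2 * w'.1 2 * Real.exp (-τ) := by
    intro τ
    simp only [gVSI, gVSIlimit, boost124, Fin.sum_univ_three, Matrix.cons_val_zero,
      Matrix.cons_val_one, Matrix.head_cons, Matrix.cons_val_two, Matrix.tail_cons,
      neg_mul, Real.exp_neg]
    have h1 := Real.exp_ne_zero τ
    have e2 : Real.exp (2 * τ) = Real.exp τ ^ 2 := by
      rw [← Real.exp_nat_mul]; norm_num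
    have e4 : Real.exp (4 * τ) = Real.exp τ ^ 4 := by
      rw [← Real.exp_nat_mul]; norm_num
    rw [e2, e4]
    field_simp
  have := tendsto_exp_neg_atTop_nhds_zero
  have h2 : Tendsto (fun τ : ℝ => gVSIlimit p w w' + 2 * (p.2 0) ^ 7 * w.1 2 * w'.1 2 *
      Real.exp (-τ)) atTop (𝓝 (gVSIlimit p w w' + 2 * (p.2 0) ^ 7 * w.1 2 * w'.1 2 * 0)) :=
    tendsto_const_nhds.add (tendsto_const_nhds.mul this)
  simpa [h] using h2
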